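/- Let V be a finite set and for each v ∈ V let φ_v ∈ ℂ^V be a unit vector. Define T : ℂ^V → ℂ^V ⊗ ℂ^V by T = ∑_{v ∈ V} (e_v ⊗ φ_v)⟨e_v|, let S be the swap operator on ℂ^V ⊗ ℂ^V (S(e_v ⊗ e_w) = e_w ⊗ e_v), let U = (2 T T† − I) S, and let M = T† S T. Then: (1) T† T = I, hence U is unitary, and M is self-adjoint with ‖M‖ ≤ 1 and entries ⟨e_v, M e_w⟩ = ⟨φ_v, e_w⟩⟨e_v, φ_w⟩. (2) If α, α' are orthogonal eigenvectors of M, then the subspaces R_α = span{T α, S T α} and R_{α'} = span{T α', S T α'} are orthogonal. (3) For an orthonormal eigenbasis (α) of M, U acts as −S on the orthogonal complement of ⊕_α R_α. (4) If M α = ρ α with ρ real and |ρ| < 1, then the vectors |α,±⟩ = (I − (ρ ∓ i√(1 − ρ²)) S) T α are nonzero eigenvectors of U with eigenvalues ρ ± i√(1 − ρ²), and R_α is two-dimensional. (5) If M α = ρ α with ρ ∈ {1, −1}, then S T α = ρ T α, so R_α is one-dimensional and T α is an eigenvector of U with eigenvalue ρ. -/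

import Mathlib

open Matrix

noncomputable def specNorm {ι : Type} [Fintype ι] [DecidableEq ι] {𝕜 : Type} [RCLike 𝕜]
    (M : Matrix ι ι 𝕜) : ℝ :=
  ‖LinearMap.toContinuousLinearMap (Matrix.toEuclideanLin M)‖

/-- The standard Hermitian inner product `⟨x, y⟩ = ∑ i, conj (x i) * y i`. -/
noncomputable def dotc {ι : Type} [Fintype ι] (x y : ι → ℂ) : ℂ :=
  ∑ i, starRingEnd ℂ (x i) * y i

/-- Squared Euclidean norm. -/
noncomputable def norm2 {ι : Type} [Fintype ι] (x : ι → ℂ) : ℝ := ∑ i, ‖x i‖ ^ 2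

section Szegedy

variable {V : Type} [Fintype V] [DecidableEq V]

/-- The isometry `T = ∑_v (e_v ⊗ φ_v)⟨e_v|`, identifying `ℂ^V ⊗ ℂ^V` with `ℂ^(V × V)`. -/
def szT (φ : V → V → ℂ) : Matrix (V × V) V ℂ :=
  Matrix.of fun p v => if p.1 = v then φ v p.2 else 0

/-- The swap operator `S` on `ℂ^V ⊗ ℂ^V ≅ ℂ^(V × V)`. -/
def szS (V : Type) [Fintype V] [DecidableEq V] : Matrix (V × V) (V × V) ℂ :=
  Matrix.of fun p q => if p.1 = q.2 ∧ p.2 = q.1 then 1 else 0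

/-- The quantum walk unitary `U = (2 T T† − I) S`. -/
noncomputable def szU (φ : V → V → ℂ) : Matrix (V × V) (V × V) ℂ :=
  ((2 : ℂ) • (szT φ * (szT φ)ᴴ) - 1) * szS V

/-- The discriminant matrix `M = T† S T`. -/
noncomputable def szM (φ : V → V → ℂ) : Matrix V V ℂ :=
  (szT φ)ᴴ * szS V * szT φ

/-- The candidate eigenvector `|α,+⟩ = (I − (ρ − i√(1−ρ²)) S) Tα`. -/
noncomputable def szVecPlus (φ : V → V → ℂ) (α : V → ℂ) (ρ : ℝ) : V × V → ℂ :=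
  (szT φ).mulVec α -
    ((ρ : ℂ) - Complex.I * (Real.sqrt (1 - ρ ^ 2) : ℂ)) • (szS V).mulVec ((szT φ).mulVec α)

/-- The candidate eigenvector `|α,−⟩ = (I − (ρ + i√(1−ρ²)) S) Tα`. -/
noncomputable def szVecMinus (φ : V → V → ℂ) (α : V → ℂ) (ρ : ℝ) : V × V → ℂ :=
  (szT φ).mulVec α -
    ((ρ : ℂ) + Complex.I * (Real.sqrt (1 - ρ ^ 2) : ℂ)) • (szS V).mulVec ((szT φ).mulVec α)

end Szegedy

/-! ### Auxiliary lemmas -/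

section DotcLemmas

set_option linter.unusedSectionVars false

variable {ι κ : Type} [Fintype ι] [Fintype κ]

lemma dotc_mulVec_left (A : Matrix ι κ ℂ) (x : κ → ℂ) (y : ι → ℂ) :
    dotc (A.mulVec x) y = dotc x (Aᴴ.mulVec y) := by
  simp only [dotc, Matrix.mulVec, dotProduct, conjTranspose_apply, map_sum,
    _root_.map_mul, Finset.mul_sum, Finset.sum_mul]
  rw [Finset.sum_comm]
  congr 1; ext j; congr 1; ext i; ring_nf; simp [mul_comm, mul_assoc, mul_left_comm]

lemma dotc_add_right (x y z : ι → ℂ) : dotc x (y + z) = dotc x y + dotc x z := by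
  simp [dotc, mul_add, Finset.sum_add_distrib]

lemma dotc_sub_right (x y z : ι → ℂ) : dotc x (y - z) = dotc x y - dotc x z := by
  simp [dotc, mul_sub, Finset.sum_sub_distrib]

lemma dotc_smul_right (c : ℂ) (x y : ι → ℂ) : dotc x (c • y) = c * dotc x y := by
  simp [dotc, Finset.mul_sum]; congr 1; ext i; ring

lemma dotc_add_left (x y z : ι → ℂ) : dotc (x + y) z = dotc x z + dotc y z := by
  simp [dotc, add_mul, Finset.sum_add_distrib]

lemma dotc_sub_left (x y z : ι → ℂ) : dotc (x - y) z = dotc x z - dotc y z := by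
  simp [dotc, sub_mul, Finset.sum_sub_distrib]

lemma dotc_smul_left (c : ℂ) (x y : ι → ℂ) :
    dotc (c • x) y = starRingEnd ℂ c * dotc x y := by
  simp [dotc, Finset.mul_sum]; congr 1; ext i; ring

lemma dotc_sum_right (x : ι → ℂ) (f : κ → ι → ℂ) :
    dotc x (∑ i, f i) = ∑ i, dotc x (f i) := by
  simp only [dotc, Finset.sum_apply, Finset.mul_sum]
  rw [Finset.sum_comm]

lemma dotc_self_eq_norm2 (x : ι → ℂ) : dotc x x = (norm2 x : ℂ) := by
  simp [dotc, norm2, Complex.conj_mul', Complex.ofReal_sum]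

lemma dotc_zero_left (y : ι → ℂ) : dotc 0 y = 0 := by simp [dotc]

lemma norm2_nonneg (x : ι → ℂ) : 0 ≤ norm2 x :=
  Finset.sum_nonneg fun i _ => by positivity

lemma norm2_eq_zero {x : ι → ℂ} (h : norm2 x = 0) : x = 0 := by
  funext i
  have := (Finset.sum_eq_zero_iff_of_nonneg (fun i _ => by positivity)).mp h i (Finset.mem_univ i)
  simpa using this

end DotcLemmas

section SzegedyLemmas

variable {V : Type} [Fintype V] [DecidableEq V]
variable (φ : V → V → ℂ) (hφ : ∀ v, ∑ w, ‖φ v w‖ ^ 2 = 1)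

lemma szS_conjTranspose : (szS V)ᴴ = szS V := by
  ext p q
  simp only [conjTranspose_apply, szS, of_apply]
  by_cases h1 : q.1 = p.2 ∧ q.2 = p.1
  · rw [if_pos h1, if_pos ⟨h1.2.symm, h1.1.symm⟩]; simp
  · rw [if_neg h1, if_neg (fun h => h1 ⟨h.2.symm, h.1.symm⟩)]; simp

lemma szS_mul_szS : szS V * szS V = 1 := by
  ext p q
  simp only [Matrix.mul_apply, szS, of_apply, one_apply]
  rw [Finset.sum_eq_single (p.2, p.1)]
  · by_cases h : p = q
    · subst h; simp
    · rw [if_pos ⟨rfl, rfl⟩, one_mul, if_neg, if_neg h]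
      rintro ⟨h1, h2⟩
      exact h (by cases p; cases q; simp_all)
  · intro b _ hb
    rw [if_neg, zero_mul]
    rintro ⟨h1, h2⟩; exact hb (by cases b; simp_all)
  · simp

include hφ in
lemma szT_isometry : (szT φ)ᴴ * szT φ = 1 := by
  ext v w
  simp only [Matrix.mul_apply, conjTranspose_apply, szT, of_apply, one_apply,
    Fintype.sum_prod_type]
  rw [Finset.sum_eq_single v]
  · by_cases h : v = w
    · subst h
      have h2 := dotc_self_eq_norm2 (φ v)
      simp only [dotc, norm2, starRingEnd_apply] at h2
      simp only [if_pos rfl, eq_self_iff_true, if_true, h2, hφ v, Complex.ofReal_one]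
    · simp [h, Ne.symm h]
  · intro a _ ha; simp [ha]
  · simp

lemma szST_entry (p : V × V) (w : V) :
    (szS V * szT φ) p w = if p.2 = w then φ w p.1 else 0 := by
  simp only [Matrix.mul_apply, szS, szT, of_apply]
  rw [Finset.sum_eq_single (p.2, p.1)]
  · rw [if_pos ⟨rfl, rfl⟩, one_mul]
  · intro b _ hb
    rw [if_neg, zero_mul]
    rintro ⟨h1, h2⟩; exact hb (by cases b; simp_all)
  · simp

lemma szM_entry (v w : V) : szM φ v w = starRingEnd ℂ (φ v w) * φ w v := by
  have h : szM φ v w = ∑ p : V × V, star (szT φ p v) * (szS V * szT φ) p w := by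
    rw [szM, Matrix.mul_assoc, Matrix.mul_apply]
    exact Finset.sum_congr rfl fun p _ => by rw [conjTranspose_apply]
  have h2 : ∀ p : V × V, star (szT φ p v) * (szS V * szT φ) p w
      = (if p.1 = v then star (φ v p.2) else 0) * (if p.2 = w then φ w p.1 else 0) := by
    intro p; rw [szST_entry]; congr 1; simp [szT, apply_ite star]
  rw [h, Finset.sum_congr rfl fun p _ => h2 p, Fintype.sum_prod_type]
  rw [Finset.sum_eq_single v]
  · rw [Finset.sum_eq_single w]
    · simp only [eq_self_iff_true, if_true, starRingEnd_apply]
    · intro b _ hb; simp [hb]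
    · simp
  · intro a _ ha
    exact Finset.sum_eq_zero fun b _ => by simp [ha]
  · simp

lemma szM_herm : (szM φ).IsHermitian := by
  unfold Matrix.IsHermitian szM
  rw [conjTranspose_mul, conjTranspose_mul, conjTranspose_conjTranspose,
    szS_conjTranspose, Matrix.mul_assoc]

include hφ in
lemma szU_mul_szT : szU φ * szT φ = (2:ℂ) • (szT φ * szM φ) - szS V * szT φ := by
  have h : szU φ * szT φ = ((2 : ℂ) • (szT φ * (szT φ)ᴴ) - 1) * (szS V * szT φ) := by
    rw [szU, Matrix.mul_assoc]
  rw [h, Matrix.sub_mul, Matrix.smul_mul, Matrix.one_mul, szM]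
  simp only [Matrix.mul_assoc]

include hφ in
lemma szU_mul_szS_szT : szU φ * (szS V * szT φ) = szT φ := by
  have h : szU φ * (szS V * szT φ)
      = ((2 : ℂ) • (szT φ * (szT φ)ᴴ) - 1) * ((szS V * szS V) * szT φ) := by
    rw [szU]; simp only [Matrix.mul_assoc]
  rw [h, szS_mul_szS, Matrix.one_mul, Matrix.sub_mul, Matrix.smul_mul, Matrix.one_mul,
    Matrix.mul_assoc, szT_isometry φ hφ, Matrix.mul_one, two_smul]
  abel

include hφ in
lemma szU_unitary : szU φ ∈ Matrix.unitaryGroup (V × V) ℂ := by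
  rw [Matrix.mem_unitaryGroup_iff]
  set P := szT φ * (szT φ)ᴴ with hPdef
  have hstar : star (szU φ) = szS V * ((2 : ℂ) • P - 1) := by
    show (szU φ)ᴴ = _
    rw [szU, conjTranspose_mul, szS_conjTranspose]
    congr 1
    rw [conjTranspose_sub, conjTranspose_smul, conjTranspose_mul,
      conjTranspose_conjTranspose, conjTranspose_one]
    norm_num
    rfl
  have hP : P * P = P := by
    rw [hPdef, Matrix.mul_assoc, ← Matrix.mul_assoc (szT φ)ᴴ, szT_isometry φ hφ,
      Matrix.one_mul]
  have h : szU φ * star (szU φ)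
      = ((2 : ℂ) • P - 1) * ((szS V * szS V) * ((2 : ℂ) • P - 1)) := by
    rw [hstar, szU]; simp only [Matrix.mul_assoc]
    rfl
  rw [h, szS_mul_szS, Matrix.one_mul]
  have expand : ((2:ℂ) • P - 1) * ((2:ℂ) • P - 1)
      = (4:ℂ) • (P * P) - (4:ℂ) • P + 1 := by
    rw [Matrix.sub_mul, Matrix.mul_sub, Matrix.mul_sub, Matrix.smul_mul, Matrix.mul_smul,
      Matrix.one_mul, Matrix.mul_one, smul_smul]
    norm_num
    module
  rw [expand, hP]
  simp

/-! Vector-level inner product identities. -/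

include hφ in
lemma dvTT (x y : V → ℂ) :
    dotc ((szT φ).mulVec x) ((szT φ).mulVec y) = dotc x y := by
  rw [dotc_mulVec_left, mulVec_mulVec, szT_isometry φ hφ, one_mulVec]

lemma dvTS (x y : V → ℂ) :
    dotc ((szT φ).mulVec x) ((szS V).mulVec ((szT φ).mulVec y))
      = dotc x ((szM φ).mulVec y) := by
  rw [dotc_mulVec_left, mulVec_mulVec, mulVec_mulVec, szM, Matrix.mul_assoc]

lemma dvSmove (x y : (V × V) → ℂ) :
    dotc ((szS V).mulVec x) y = dotc x ((szS V).mulVec y) := by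
  rw [dotc_mulVec_left, szS_conjTranspose]

lemma dvSS (x y : (V × V) → ℂ) :
    dotc ((szS V).mulVec x) ((szS V).mulVec y) = dotc x y := by
  rw [dotc_mulVec_left, szS_conjTranspose, mulVec_mulVec, szS_mul_szS, one_mulVec]

include hφ in
lemma gram (α : V → ℂ) (ρ : ℂ) (hα : (szM φ).mulVec α = ρ • α) (hn : dotc α α = 1) :
    dotc ((szT φ).mulVec α) ((szT φ).mulVec α) = 1 ∧
    dotc ((szT φ).mulVec α) ((szS V).mulVec ((szT φ).mulVec α)) = ρ ∧
    dotc ((szS V).mulVec ((szT φ).mulVec α)) ((szT φ).mulVec α) = ρ ∧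
    dotc ((szS V).mulVec ((szT φ).mulVec α)) ((szS V).mulVec ((szT φ).mulVec α)) = 1 := by
  refine ⟨by rw [dvTT φ hφ, hn], ?_, ?_, by rw [dvSS, dvTT φ hφ, hn]⟩
  · rw [dvTS, hα, dotc_smul_right, hn, mul_one]
  · rw [dvSmove, dvTS, hα, dotc_smul_right, hn, mul_one]

include hφ in
lemma hUTv (α : V → ℂ) (ρ : ℂ) (hα : (szM φ).mulVec α = ρ • α) :
    (szU φ).mulVec ((szT φ).mulVec α)
      = (2:ℂ) • (ρ • (szT φ).mulVec α) - (szS V).mulVec ((szT φ).mulVec α) := by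
  rw [mulVec_mulVec, szU_mul_szT φ hφ, Matrix.sub_mulVec, smul_mulVec,
    ← mulVec_mulVec, hα, mulVec_smul, ← mulVec_mulVec]

include hφ in
lemma hUSTv (α : V → ℂ) :
    (szU φ).mulVec ((szS V).mulVec ((szT φ).mulVec α)) = (szT φ).mulVec α := by
  rw [mulVec_mulVec, mulVec_mulVec, Matrix.mul_assoc, szU_mul_szS_szT φ hφ]

end SzegedyLemmas

/-- Szegedy correspondence.  For unit vectors `φ_v ∈ ℂ^V`, with
`T = ∑_v (e_v ⊗ φ_v)⟨e_v|`, `S` the swap, `U = (2TT† − I)S` and `M = T†ST`: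
(1) `T†T = I`, `U` is unitary, `M` is self-adjoint with `‖M‖ ≤ 1` and entries
`⟨e_v, M e_w⟩ = ⟨φ_v, e_w⟩⟨e_v, φ_w⟩`;
(2) for orthogonal eigenvectors `α, α'` of `M`, the subspaces `span{Tα, STα}` and
`span{Tα', STα'}` are orthogonal;
(3) for an orthonormal eigenbasis `(b i)` of `M`, `U` acts as `−S` on the orthogonal
complement of the sum of the subspaces `span{T(b i), ST(b i)}`;
(4) if `Mα = ρα` with `α` a unit vector, `ρ` real, `|ρ| < 1`, then
`|α,±⟩ = (I − (ρ ∓ i√(1−ρ²))S)Tα` are nonzero eigenvectors of `U` with eigenvalues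
`ρ ± i√(1−ρ²)`, and `span{Tα, STα}` is two-dimensional;
(5) if `Mα = ρα` with `α` a unit vector and `ρ ∈ {1, −1}`, then `STα = ρTα`,
`span{Tα, STα}` is one-dimensional, and `U(Tα) = ρ Tα`. -/
theorem szegedy_spectral_correspondence
    {V : Type} [Fintype V] [DecidableEq V]
    (φ : V → V → ℂ) (hφ : ∀ v, ∑ w, ‖φ v w‖ ^ 2 = 1) :
    -- (1)
    ((szT φ)ᴴ * szT φ = 1) ∧
    szU φ ∈ Matrix.unitaryGroup (V × V) ℂ ∧
    (szM φ).IsHermitian ∧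
    specNorm (szM φ) ≤ 1 ∧
    (∀ v w : V, szM φ v w = starRingEnd ℂ (φ v w) * φ w v) ∧
    -- (2)
    (∀ (α α' : V → ℂ) (ρ ρ' : ℂ),
      (szM φ).mulVec α = ρ • α → (szM φ).mulVec α' = ρ' • α' → dotc α α' = 0 →
      ∀ u ∈ Submodule.span ℂ
        ({(szT φ).mulVec α, (szS V).mulVec ((szT φ).mulVec α)} : Set (V × V → ℂ)),
      ∀ u' ∈ Submodule.span ℂ
        ({(szT φ).mulVec α', (szS V).mulVec ((szT φ).mulVec α')} : Set (V × V → ℂ)),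
        dotc u u' = 0) ∧
    -- (3)
    (∀ (ι : Type) [Fintype ι] [DecidableEq ι] (bs : ι → V → ℂ) (ρ : ι → ℂ),
      (∀ i, (szM φ).mulVec (bs i) = ρ i • bs i) →
      (∀ i i', dotc (bs i) (bs i') = if i = i' then 1 else 0) →
      (∀ ψ : V → ℂ, ψ ∈ Submodule.span ℂ (Set.range bs)) →
      ∀ ψ : V × V → ℂ,
        (∀ i, dotc ((szT φ).mulVec (bs i)) ψ = 0 ∧
              dotc ((szS V).mulVec ((szT φ).mulVec (bs i))) ψ = 0) →
        (szU φ).mulVec ψ = -((szS V).mulVec ψ)) ∧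
    -- (4)
    (∀ (α : V → ℂ) (ρ : ℝ),
      (szM φ).mulVec α = (ρ : ℂ) • α → dotc α α = 1 → |ρ| < 1 →
      szVecPlus φ α ρ ≠ 0 ∧ szVecMinus φ α ρ ≠ 0 ∧
      (szU φ).mulVec (szVecPlus φ α ρ)
        = ((ρ : ℂ) + Complex.I * (Real.sqrt (1 - ρ ^ 2) : ℂ)) • szVecPlus φ α ρ ∧
      (szU φ).mulVec (szVecMinus φ α ρ)
        = ((ρ : ℂ) - Complex.I * (Real.sqrt (1 - ρ ^ 2) : ℂ)) • szVecMinus φ α ρ ∧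
      Module.finrank ℂ (Submodule.span ℂ
        ({(szT φ).mulVec α, (szS V).mulVec ((szT φ).mulVec α)} : Set (V × V → ℂ))) = 2) ∧
    -- (5)
    (∀ (α : V → ℂ) (ρ : ℝ),
      (szM φ).mulVec α = (ρ : ℂ) • α → dotc α α = 1 → (ρ = 1 ∨ ρ = -1) →
      (szS V).mulVec ((szT φ).mulVec α) = (ρ : ℂ) • (szT φ).mulVec α ∧
      Module.finrank ℂ (Submodule.span ℂ
        ({(szT φ).mulVec α, (szS V).mulVec ((szT φ).mulVec α)} : Set (V × V → ℂ))) = 1 ∧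
      (szU φ).mulVec ((szT φ).mulVec α) = (ρ : ℂ) • (szT φ).mulVec α) := by
  refine ⟨szT_isometry φ hφ, szU_unitary φ hφ, szM_herm φ, ?_, szM_entry φ, ?_, ?_, ?_, ?_⟩
  · -- specNorm bound
    apply ContinuousLinearMap.opNorm_le_bound _ zero_le_one
    intro x
    rw [one_mul]
    have happ : (LinearMap.toContinuousLinearMap (Matrix.toEuclideanLin (szM φ))) x
        = (WithLp.equiv 2 (V → ℂ)).symm ((szM φ).mulVec ((WithLp.equiv 2 (V → ℂ)) x)) := rfl
    rw [happ, EuclideanSpace.norm_eq, EuclideanSpace.norm_eq]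
    set x' : V → ℂ := (WithLp.equiv 2 (V → ℂ)) x with hx'
    show Real.sqrt (norm2 ((szM φ).mulVec x')) ≤ Real.sqrt (norm2 x')
    apply Real.sqrt_le_sqrt
    have hMx : (szM φ).mulVec x'
        = (szT φ)ᴴ.mulVec ((szS V).mulVec ((szT φ).mulVec x')) := by
      rw [mulVec_mulVec, mulVec_mulVec, szM, Matrix.mul_assoc]
    rw [hMx]
    have hn2T : ∀ z : V → ℂ, norm2 ((szT φ).mulVec z) = norm2 z := by
      intro z
      have := dvTT φ hφ z z
      rw [dotc_self_eq_norm2, dotc_self_eq_norm2] at this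
      exact_mod_cast this
    have hn2S : ∀ z : (V × V) → ℂ, norm2 ((szS V).mulVec z) = norm2 z := by
      intro z
      have := dvSS (V := V) z z
      rw [dotc_self_eq_norm2, dotc_self_eq_norm2] at this
      exact_mod_cast this
    have hn2Tc : ∀ y : (V × V) → ℂ, norm2 ((szT φ)ᴴ.mulVec y) ≤ norm2 y := by
      intro y
      set u : (V × V) → ℂ := (szT φ).mulVec ((szT φ)ᴴ.mulVec y) with hu
      have hyu : dotc y u = dotc ((szT φ)ᴴ.mulVec y) ((szT φ)ᴴ.mulVec y) := by
        rw [hu]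
        rw [show dotc ((szT φ)ᴴ.mulVec y) ((szT φ)ᴴ.mulVec y)
            = dotc y (((szT φ)ᴴ)ᴴ.mulVec ((szT φ)ᴴ.mulVec y)) from
          dotc_mulVec_left _ _ _, conjTranspose_conjTranspose]
      have huy : dotc u y = dotc ((szT φ)ᴴ.mulVec y) ((szT φ)ᴴ.mulVec y) := by
        rw [hu, dotc_mulVec_left]
      have huu : dotc u u = dotc ((szT φ)ᴴ.mulVec y) ((szT φ)ᴴ.mulVec y) := by
        rw [hu, dvTT φ hφ]
      have key : dotc (y - u) (y - u)
          = dotc y y - dotc ((szT φ)ᴴ.mulVec y) ((szT φ)ᴴ.mulVec y) := by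
        rw [dotc_sub_left, dotc_sub_right, dotc_sub_right, hyu, huy, huu]; ring
      rw [dotc_self_eq_norm2, dotc_self_eq_norm2, dotc_self_eq_norm2] at key
      have key' : norm2 (y - u) = norm2 y - norm2 ((szT φ)ᴴ.mulVec y) := by
        exact_mod_cast key
      have := norm2_nonneg (y - u)
      linarith
    calc norm2 ((szT φ)ᴴ.mulVec ((szS V).mulVec ((szT φ).mulVec x')))
        ≤ norm2 ((szS V).mulVec ((szT φ).mulVec x')) := hn2Tc _
      _ = norm2 ((szT φ).mulVec x') := hn2S _
      _ = norm2 x' := hn2T _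
  · -- (2) orthogonality of invariant subspaces
    intro α α' ρ ρ' hα hα' h0 u hu u' hu'
    obtain ⟨a, b, rfl⟩ := Submodule.mem_span_pair.mp hu
    obtain ⟨a', b', rfl⟩ := Submodule.mem_span_pair.mp hu'
    have c1 : dotc ((szT φ).mulVec α) ((szT φ).mulVec α') = 0 := by
      rw [dvTT φ hφ, h0]
    have c2 : dotc ((szT φ).mulVec α) ((szS V).mulVec ((szT φ).mulVec α')) = 0 := by
      rw [dvTS, hα', dotc_smul_right, h0, mul_zero]
    have c3 : dotc ((szS V).mulVec ((szT φ).mulVec α)) ((szT φ).mulVec α') = 0 := by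
      rw [dvSmove]; exact c2
    have c4 : dotc ((szS V).mulVec ((szT φ).mulVec α))
        ((szS V).mulVec ((szT φ).mulVec α')) = 0 := by
      rw [dvSS]; exact c1
    simp only [dotc_add_left, dotc_add_right, dotc_smul_left, dotc_smul_right,
      c1, c2, c3, c4, mul_zero, add_zero, zero_add]
  · -- (3) U acts as -S on the complement
    intro ι _ _ bs ρs heig horth hspan ψ hperp
    have key : ∀ x : V → ℂ, (∀ i, dotc (bs i) x = 0) → x = 0 := by
      intro x hx
      obtain ⟨c, hc⟩ := (Submodule.mem_span_range_iff_exists_fun ℂ).mp (hspan x)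
      have hc0 : ∀ j, c j = 0 := by
        intro j
        have h0 := hx j
        rw [← hc, dotc_sum_right] at h0
        simp only [dotc_smul_right] at h0
        rw [Finset.sum_congr rfl (fun i _ => by rw [horth j i])] at h0
        simpa using h0
      rw [← hc]
      simp [hc0]
    have hT : (szT φ)ᴴ.mulVec ψ = 0 := by
      apply key
      intro i
      have := (hperp i).1
      rwa [dotc_mulVec_left] at this
    have hTS : (szT φ)ᴴ.mulVec ((szS V).mulVec ψ) = 0 := by
      apply key
      intro i
      have := (hperp i).2
      rw [dotc_mulVec_left, szS_conjTranspose] at this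
      rwa [dotc_mulVec_left] at this
    have hexp : (szU φ).mulVec ψ
        = (2:ℂ) • ((szT φ).mulVec ((szT φ)ᴴ.mulVec ((szS V).mulVec ψ)))
          - (szS V).mulVec ψ := by
      conv_lhs => rw [szU]
      rw [← mulVec_mulVec, Matrix.sub_mulVec, smul_mulVec, one_mulVec,
        ← mulVec_mulVec]
    rw [hexp, hTS, mulVec_zero, smul_zero, zero_sub]
  · -- (4) complex eigenvalues
    intro α ρ hα hn hρ
    obtain ⟨g1, g2, g3, g4⟩ := gram φ hφ α (ρ:ℂ) hα hn
    have habs := abs_lt.mp hρ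
    have hρ2lt : ρ^2 < 1 := by nlinarith
    have hs : (Real.sqrt (1 - ρ^2))^2 = 1 - ρ^2 := Real.sq_sqrt (by nlinarith)
    set s : ℂ := (Real.sqrt (1 - ρ^2) : ℂ) with hsdef
    have hsc : s^2 = 1 - (ρ:ℂ)^2 := by
      rw [hsdef, ← Complex.ofReal_pow, hs]; push_cast; ring
    have hmul : ((ρ:ℂ) + Complex.I * s) * ((ρ:ℂ) - Complex.I * s) = 1 := by
      have hI : (Complex.I)^2 = -1 := Complex.I_sq
      linear_combination (-(s^2)) * hI + hsc
    have hconjm : starRingEnd ℂ ((ρ:ℂ) - Complex.I * s) = (ρ:ℂ) + Complex.I * s := by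
      rw [hsdef]
      simp [map_sub, _root_.map_mul, Complex.conj_I, Complex.conj_ofReal]
    have hconjp : starRingEnd ℂ ((ρ:ℂ) + Complex.I * s) = (ρ:ℂ) - Complex.I * s := by
      rw [hsdef]
      simp [map_add, _root_.map_mul, Complex.conj_I, Complex.conj_ofReal]
      ring
    have hvalp : dotc (szVecPlus φ α ρ) (szVecPlus φ α ρ) = 2 - 2*(ρ:ℂ)^2 := by
      unfold szVecPlus
      simp only [← hsdef, dotc_sub_left, dotc_sub_right, dotc_smul_left, dotc_smul_right,
        g1, g2, g3, g4, hconjm]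
      linear_combination hmul
    have hvalm : dotc (szVecMinus φ α ρ) (szVecMinus φ α ρ) = 2 - 2*(ρ:ℂ)^2 := by
      unfold szVecMinus
      simp only [← hsdef, dotc_sub_left, dotc_sub_right, dotc_smul_left, dotc_smul_right,
        g1, g2, g3, g4, hconjp]
      linear_combination hmul
    have hval_ne : (2 - 2*(ρ:ℂ)^2) ≠ 0 := by
      intro h
      have : (ρ:ℝ)^2 = 1 := by
        have h' : ((2 - 2*ρ^2 : ℝ) : ℂ) = 0 := by push_cast; linear_combination h
        have := Complex.ofReal_eq_zero.mp h'
        nlinarith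
      nlinarith
    refine ⟨?_, ?_, ?_, ?_, ?_⟩
    · intro h
      rw [h, dotc_zero_left] at hvalp
      exact hval_ne hvalp.symm
    · intro h
      rw [h, dotc_zero_left] at hvalm
      exact hval_ne hvalm.symm
    · unfold szVecPlus
      rw [Matrix.mulVec_sub, Matrix.mulVec_smul, hUTv φ hφ α (ρ:ℂ) hα, hUSTv φ hφ α,
        smul_sub, ← hsdef, smul_smul, smul_smul, hmul, one_smul]
      module
    · unfold szVecMinus
      rw [Matrix.mulVec_sub, Matrix.mulVec_smul, hUTv φ hφ α (ρ:ℂ) hα, hUSTv φ hφ α,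
        smul_sub, ← hsdef, smul_smul, smul_smul,
        show ((ρ:ℂ) - Complex.I * s) * ((ρ:ℂ) + Complex.I * s) = 1 by
          linear_combination hmul, one_smul]
      module
    · -- finrank 2
      have hρ2c : (ρ:ℂ)^2 ≠ 1 := by
        intro h
        have : (ρ:ℝ)^2 = 1 := by exact_mod_cast h
        nlinarith
      have hli : LinearIndependent ℂ
          ![(szT φ).mulVec α, (szS V).mulVec ((szT φ).mulVec α)] := by
        rw [LinearIndependent.pair_iff]
        intro a b hab
        have e1 : dotc ((szT φ).mulVec α)
            (a • (szT φ).mulVec α + b • (szS V).mulVec ((szT φ).mulVec α)) = 0 := by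
          rw [hab]; simp [dotc]
        have e2 : dotc ((szS V).mulVec ((szT φ).mulVec α))
            (a • (szT φ).mulVec α + b • (szS V).mulVec ((szT φ).mulVec α)) = 0 := by
          rw [hab]; simp [dotc]
        rw [dotc_add_right, dotc_smul_right, dotc_smul_right, g1, g2] at e1
        rw [dotc_add_right, dotc_smul_right, dotc_smul_right, g3, g4] at e2
        have ha0 : a = 0 := by
          have h' : a * (1 - (ρ:ℂ)^2) = 0 := by linear_combination e1 - (ρ:ℂ) * e2
          rcases mul_eq_zero.mp h' with h | h
          · exact h
          · exact absurd (by linear_combination -h) hρ2c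
        refine ⟨ha0, ?_⟩
        rw [ha0] at e2
        simpa using e2
      have hrange : Set.range ![(szT φ).mulVec α, (szS V).mulVec ((szT φ).mulVec α)]
          = {(szT φ).mulVec α, (szS V).mulVec ((szT φ).mulVec α)} := by
        ext x
        constructor
        · rintro ⟨i, rfl⟩
          fin_cases i <;> simp
        · rintro (rfl | rfl)
          · exact ⟨0, rfl⟩
          · exact ⟨1, rfl⟩
      rw [← hrange, finrank_span_eq_card hli]
      simp
  · -- (5) real eigenvalues ±1
    intro α ρ hα hn hpm
    obtain ⟨g1, g2, g3, g4⟩ := gram φ hφ α (ρ:ℂ) hα hn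
    have hρ2 : (ρ:ℝ)^2 = 1 := by rcases hpm with h | h <;> rw [h] <;> norm_num
    have hρ2c : (ρ:ℂ)^2 = 1 := by exact_mod_cast hρ2
    have hδ : dotc ((szS V).mulVec ((szT φ).mulVec α) - (ρ:ℂ) • (szT φ).mulVec α)
        ((szS V).mulVec ((szT φ).mulVec α) - (ρ:ℂ) • (szT φ).mulVec α) = 0 := by
      rw [dotc_sub_left, dotc_sub_right, dotc_sub_right, dotc_smul_left, dotc_smul_right,
        dotc_smul_right, dotc_smul_left, g1, g2, g3, g4, Complex.conj_ofReal]
      linear_combination (-1 : ℂ) * hρ2c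
    have h5a : (szS V).mulVec ((szT φ).mulVec α) = (ρ:ℂ) • (szT φ).mulVec α := by
      rw [dotc_self_eq_norm2] at hδ
      have := norm2_eq_zero (Complex.ofReal_eq_zero.mp hδ)
      exact sub_eq_zero.mp this
    have hTvne : (szT φ).mulVec α ≠ 0 := by
      intro h
      rw [h, dotc_zero_left] at g1
      exact one_ne_zero g1.symm
    refine ⟨h5a, ?_, ?_⟩
    · have hspan : Submodule.span ℂ
          ({(szT φ).mulVec α, (szS V).mulVec ((szT φ).mulVec α)} : Set (V × V → ℂ))
          = Submodule.span ℂ {(szT φ).mulVec α} := by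
        rw [h5a]
        apply le_antisymm
        · rw [Submodule.span_le]
          intro x hx
          simp only [Set.mem_insert_iff, Set.mem_singleton_iff] at hx
          rcases hx with rfl | rfl
          · exact Submodule.mem_span_singleton_self _
          · exact Submodule.smul_mem _ _ (Submodule.mem_span_singleton_self _)
        · exact Submodule.span_mono
            (Set.singleton_subset_iff.mpr (Set.mem_insert _ _))
      rw [hspan]
      exact finrank_span_singleton hTvne
    · rw [hUTv φ hφ α (ρ:ℂ) hα, h5a]
      module
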